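/- Let M, N, K be positive integers with K ≥ 2 and N < (K−1)M+1. Then for every real r with 0 ≤ r ≤ N/K, the maximum over reals D with 0 ≤ D ≤ N/K of min over integers i with 1 ≤ i ≤ K of d^{iD}_{iM,N}(i·r) equals M·N − M·K·r, and it is attained at D = N/K. -/

import Mathlib

/-- The index `l` of the interval of average dimensions per channel use `D`
to which `D` belongs: the smallest `l` with `D ≤ (MN − l(l+1))/(N+M−1−2l)`. -/
noncomputable def lIdx (M N : ℕ) (D : ℝ) : ℕ :=
  sInf {l : ℕ |
    D ≤ ((M : ℝ) * (N : ℝ) - (l : ℝ) * ((l : ℝ) + 1)) /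
        ((N : ℝ) + (M : ℝ) - 1 - 2 * (l : ℝ))}

/-- The upper bound `d^{D}_{M,N}(r)` on the DMT of infinite constellations with
`D` average dimensions per channel use, in a point-to-point channel with `M`
transmit and `N` receive antennas.  It vanishes for `r ≥ D` or `D = 0`, and for
`0 ≤ r < D` it is the straight line `((M−l)(N−l)/(D−l))·(D−r)` where `l = lIdx M N D`
is determined by the interval of `D`. -/
noncomputable def dIC (M N : ℕ) (D r : ℝ) : ℝ :=
  if D ≤ 0 ∨ D ≤ r then 0
  else
    (((M : ℝ) - (lIdx M N D : ℝ)) * ((N : ℝ) - (lIdx M N D : ℝ)) /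
        (D - (lIdx M N D : ℝ))) * (D - r)

/-- The optimal point-to-point DMT `d^{FC}_{M,N}(r)` of finite constellations:
the piecewise linear function through the points `(l, (M−l)(N−l))`. -/
noncomputable def dFC (M N : ℕ) (r : ℝ) : ℝ :=
  ((M : ℝ) - (⌊r⌋ : ℝ)) * ((N : ℝ) - (⌊r⌋ : ℝ))
    + (r - (⌊r⌋ : ℝ)) *
      (((M : ℝ) - (⌊r⌋ : ℝ) - 1) * ((N : ℝ) - (⌊r⌋ : ℝ) - 1)
        - ((M : ℝ) - (⌊r⌋ : ℝ)) * ((N : ℝ) - (⌊r⌋ : ℝ)))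

/-- The optimal symmetric multiple-access DMT `d^{FC}_{K,M,N}(r)` of finite
constellations: it equals `d^{FC}_{M,N}(r)` for `r ≤ min(N/(K+1), M)` and
`d^{FC}_{KM,N}(K·r)` afterwards. -/
noncomputable def dFCmac (K M N : ℕ) (r : ℝ) : ℝ :=
  if r ≤ min ((N : ℝ) / ((K : ℝ) + 1)) (M : ℝ) then dFC M N r
  else dFC (K * M) N ((K : ℝ) * r)

private lemma lIdx_min_mem {P Q : ℕ} (hP : 1 ≤ P) (hQ : 1 ≤ Q) {D : ℝ}
    (hDP : D ≤ (P : ℝ)) (hDQ : D ≤ (Q : ℝ)) :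
    (min P Q - 1) ∈ {l : ℕ |
      D ≤ ((P : ℝ) * (Q : ℝ) - (l : ℝ) * ((l : ℝ) + 1)) /
        ((Q : ℝ) + (P : ℝ) - 1 - 2 * (l : ℝ))} := by
  have hm : 1 ≤ min P Q := le_min hP hQ
  have hc : ((min P Q - 1 : ℕ) : ℝ) = ((min P Q : ℕ) : ℝ) - 1 := by
    push_cast [hm]; ring
  set m : ℝ := ((min P Q : ℕ) : ℝ) with hmdef
  have hmP : m ≤ (P : ℝ) := by rw [hmdef]; exact_mod_cast min_le_left P Q
  have hmQ : m ≤ (Q : ℝ) := by rw [hmdef]; exact_mod_cast min_le_right P Q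
  have hm1 : 1 ≤ m := by rw [hmdef]; exact_mod_cast hm
  have hden : (0 : ℝ) < (Q : ℝ) + (P : ℝ) - 1 - 2 * (m - 1) := by linarith
  have hPQ : m = (P : ℝ) ∨ m = (Q : ℝ) := by
    rcases le_total P Q with h | h
    · left; rw [hmdef, min_eq_left h]
    · right; rw [hmdef, min_eq_right h]
  have hD : D ≤ m := by rcases hPQ with h | h <;> rw [h] <;> assumption
  rw [Set.mem_setOf_eq, hc, le_div_iff₀ hden]
  have hnum : m * ((Q : ℝ) + (P : ℝ) - 1 - 2 * (m - 1))
      = (P : ℝ) * (Q : ℝ) - (m - 1) * ((m - 1) + 1) := by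
    rcases hPQ with h | h <;> rw [h] <;> ring_nf <;> nlinarith [h]
  nlinarith [mul_le_mul_of_nonneg_right hD (le_of_lt hden)]

private lemma lIdx_le {P Q : ℕ} (hP : 1 ≤ P) (hQ : 1 ≤ Q) {D : ℝ}
    (hDP : D ≤ (P : ℝ)) (hDQ : D ≤ (Q : ℝ)) :
    lIdx P Q D ≤ min P Q - 1 :=
  Nat.sInf_le (lIdx_min_mem hP hQ hDP hDQ)

private lemma lIdx_lt {P Q : ℕ} (hP : 1 ≤ P) (hQ : 1 ≤ Q) {D : ℝ}
    (hD0 : 0 < D) (hDP : D ≤ (P : ℝ)) (hDQ : D ≤ (Q : ℝ)) :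
    (lIdx P Q D : ℝ) < D := by
  have hle : lIdx P Q D ≤ min P Q - 1 := lIdx_le hP hQ hDP hDQ
  set l := lIdx P Q D with hl
  rcases Nat.eq_zero_or_pos l with h0 | h1
  · rw [h0]; exact_mod_cast hD0
  · have hm : 1 ≤ min P Q := le_min hP hQ
    have hlP : l + 1 ≤ P := by have := min_le_left P Q; omega
    have hlQ : l + 1 ≤ Q := by have := min_le_right P Q; omega
    have hsum : 2 * l + 2 ≤ P + Q := by
      have h1 := min_le_left P Q; have h2 := min_le_right P Q; omega
    have hnot : (l - 1) ∉ {l : ℕ |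
        D ≤ ((P : ℝ) * (Q : ℝ) - (l : ℝ) * ((l : ℝ) + 1)) /
          ((Q : ℝ) + (P : ℝ) - 1 - 2 * (l : ℝ))} :=
      Nat.notMem_of_lt_sInf (by rw [hl]; exact Nat.sub_lt h1 one_pos)
    rw [Set.mem_setOf_eq, not_le] at hnot
    have hc : ((l - 1 : ℕ) : ℝ) = (l : ℝ) - 1 := by push_cast [h1]; ring
    rw [hc] at hnot
    have hlPr : (l : ℝ) + 1 ≤ (P : ℝ) := by exact_mod_cast hlP
    have hlQr : (l : ℝ) + 1 ≤ (Q : ℝ) := by exact_mod_cast hlQ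
    have hsumr : 2 * (l : ℝ) + 2 ≤ (P : ℝ) + (Q : ℝ) := by exact_mod_cast hsum
    have hden : (0 : ℝ) < (Q : ℝ) + (P : ℝ) - 1 - 2 * ((l : ℝ) - 1) := by linarith
    have hfr : (l : ℝ) ≤ ((P : ℝ) * (Q : ℝ) - ((l : ℝ) - 1) * (((l : ℝ) - 1) + 1)) /
        ((Q : ℝ) + (P : ℝ) - 1 - 2 * ((l : ℝ) - 1)) := by
      rw [le_div_iff₀ hden]
      nlinarith [mul_nonneg (by linarith : (0:ℝ) ≤ (P : ℝ) - l)
        (by linarith : (0:ℝ) ≤ (Q : ℝ) - l)]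
    linarith

private lemma lIdx_zero {P Q : ℕ} {D : ℝ}
    (h : D ≤ (P : ℝ) * (Q : ℝ) / ((Q : ℝ) + (P : ℝ) - 1)) : lIdx P Q D = 0 := by
  refine Nat.sInf_eq_zero.2 (Or.inl ?_)
  rw [Set.mem_setOf_eq]
  convert h using 2 <;> push_cast <;> ring

private lemma dIC_pp (M N K : ℕ) (hM : 0 < M) (hN : 0 < N) (hK : 0 < K)
    (hNK : N + M ≤ K * M) {D r : ℝ} (hD0 : 0 < D) (hrD : r < D)
    (hD : D ≤ (N : ℝ) / (K : ℝ)) :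
    dIC M N D r = ((M : ℝ) * (N : ℝ) / D) * (D - r) := by
  have hKr : (0:ℝ) < K := by exact_mod_cast hK
  have hNr : (0:ℝ) < N := by exact_mod_cast hN
  have hMr : (0:ℝ) < M := by exact_mod_cast hM
  have hN1 : (1:ℝ) ≤ N := by exact_mod_cast Nat.one_le_cast.mpr hN
  have hM1 : (1:ℝ) ≤ M := by exact_mod_cast Nat.one_le_cast.mpr hM
  have hden : (0:ℝ) < (N:ℝ) + (M:ℝ) - 1 := by linarith
  have hKM : (N:ℝ) + (M:ℝ) ≤ (K:ℝ) * (M:ℝ) := by exact_mod_cast hNK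
  have h0 : lIdx M N D = 0 := by
    apply lIdx_zero
    have h2 : (N:ℝ)/(K:ℝ) ≤ (M:ℝ)*(N:ℝ)/((N:ℝ)+(M:ℝ)-1) := by
      rw [div_le_div_iff₀ hKr hden]
      nlinarith
    linarith
  rw [dIC, if_neg (by push_neg; exact ⟨hD0, hrD⟩), h0]
  norm_num

private lemma dIC_le (M N K : ℕ) (hM : 0 < M) (hN : 0 < N) (hK : 0 < K)
    (hNK : N + M ≤ K * M) {D r : ℝ} (hr0 : 0 ≤ r) (hrN : r ≤ (N:ℝ)/(K:ℝ))
    (hD : D ≤ (N : ℝ) / (K : ℝ)) :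
    dIC M N D r ≤ (M:ℝ)*(N:ℝ) - (M:ℝ)*(K:ℝ)*r := by
  have hKr : (0:ℝ) < K := by exact_mod_cast hK
  have hMr : (0:ℝ) < M := by exact_mod_cast hM
  have hNr : (0:ℝ) < N := by exact_mod_cast hN
  have hKrN : (K:ℝ) * r ≤ N := by
    rw [le_div_iff₀ hKr] at hrN; linarith
  have hRHS : 0 ≤ (M:ℝ)*(N:ℝ) - (M:ℝ)*(K:ℝ)*r := by nlinarith
  by_cases hcond : D ≤ 0 ∨ D ≤ r
  · rw [dIC, if_pos hcond]; exact hRHS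
  · push_neg at hcond
    obtain ⟨hD0, hrD⟩ := hcond
    rw [dIC_pp M N K hM hN hK hNK hD0 hrD hD]
    rw [div_mul_eq_mul_div, div_le_iff₀ hD0]
    have hKD : (K:ℝ) * D ≤ N := by rw [le_div_iff₀ hKr] at hD; linarith
    nlinarith [mul_nonneg hr0 (sub_nonneg.2 hKD)]

private lemma dIC_eq (M N K : ℕ) (hM : 0 < M) (hN : 0 < N) (hK : 0 < K)
    (hNK : N + M ≤ K * M) {r : ℝ} (hr0 : 0 ≤ r) (hrN : r ≤ (N:ℝ)/(K:ℝ)) :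
    dIC M N ((N:ℝ)/(K:ℝ)) r = (M:ℝ)*(N:ℝ) - (M:ℝ)*(K:ℝ)*r := by
  have hKr : (0:ℝ) < K := by exact_mod_cast hK
  have hNr : (0:ℝ) < N := by exact_mod_cast hN
  rcases eq_or_lt_of_le hrN with he | hlt
  · rw [dIC, if_pos (Or.inr (le_of_eq he.symm)), he]
    field_simp
    ring
  · rw [dIC_pp M N K hM hN hK hNK (by positivity) hlt le_rfl]
    field_simp

private lemma keyineq (m n k i l : ℝ) (hm : 1 ≤ m) (hi : 1 ≤ i) (hik : i ≤ k)
    (hl0 : 0 ≤ l) (hln : l + 1 ≤ n) (hlm : l + 1 ≤ i * m)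
    (hnk : n + m ≤ k * m) :
    i * m * n - m * k * l ≤ i * ((i * m - l) * (n - l)) := by
  rcases le_total n ((i - 1) * m) with h | h
  · have h1 : (0:ℝ) ≤ (n - 1 - l) * ((i - 1) * m - l) :=
      mul_nonneg (by linarith) (by linarith)
    nlinarith [mul_nonneg (by linarith : (0:ℝ) ≤ i) h1,
      mul_nonneg (by linarith : (0:ℝ) ≤ i) (by linarith : (0:ℝ) ≤ (i-1)*m - l),
      mul_nonneg hl0 (mul_nonneg (by linarith : (0:ℝ) ≤ m) (by linarith : (0:ℝ) ≤ k - i))]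
  · nlinarith [mul_nonneg (by linarith : (0:ℝ) ≤ i) (sq_nonneg (l - (i-1)*m)),
      mul_nonneg (mul_nonneg (by linarith : (0:ℝ) ≤ n - (i-1)*m) (by linarith : (0:ℝ) ≤ i - 1))
        (by linarith : (0:ℝ) ≤ i*m - l),
      mul_nonneg hl0 (by linarith : (0:ℝ) ≤ m*k - m - n)]

private lemma dIC_ge (M N K i : ℕ) (hM : 0 < M) (hN : 0 < N) (hK : 0 < K)
    (hNK : N + M ≤ K * M) (hi : 1 ≤ i) (hiK : i ≤ K)
    {r : ℝ} (hr0 : 0 ≤ r) (hrN : r ≤ (N:ℝ)/(K:ℝ)) :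
    (M:ℝ)*(N:ℝ) - (M:ℝ)*(K:ℝ)*r ≤ dIC (i*M) N ((i:ℝ) * ((N:ℝ)/(K:ℝ))) ((i:ℝ)*r) := by
  have hKr : (0:ℝ) < K := by exact_mod_cast hK
  have hNr : (0:ℝ) < N := by exact_mod_cast hN
  have hMr : (0:ℝ) < M := by exact_mod_cast hM
  have hir : (1:ℝ) ≤ (i:ℝ) := by exact_mod_cast hi
  have hiKr : (i:ℝ) ≤ (K:ℝ) := by exact_mod_cast hiK
  have hKM : (N:ℝ) + (M:ℝ) ≤ (K:ℝ) * (M:ℝ) := by exact_mod_cast hNK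
  set D : ℝ := (i:ℝ) * ((N:ℝ)/(K:ℝ)) with hDdef
  have hD0 : 0 < D := by rw [hDdef]; positivity
  by_cases hcond : D ≤ 0 ∨ D ≤ (i:ℝ)*r
  · rcases hcond with h | h
    · linarith
    · rw [dIC, if_pos (Or.inr h)]
      have hNKle : (N:ℝ)/(K:ℝ) ≤ r := by
        have := le_of_mul_le_mul_left (by rw [hDdef] at h; exact h : (i:ℝ)*((N:ℝ)/(K:ℝ)) ≤ (i:ℝ)*r) (by linarith : (0:ℝ) < (i:ℝ))
        linarith
      have : (N:ℝ) ≤ (K:ℝ)*r := by rw [div_le_iff₀ hKr] at hNKle; linarith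
      nlinarith
  · push_neg at hcond
    obtain ⟨-, hrD⟩ := hcond
    have hrlt : r < (N:ℝ)/(K:ℝ) := by
      by_contra hc
      push_neg at hc
      have : D ≤ (i:ℝ)*r := by
        rw [hDdef]; exact mul_le_mul_of_nonneg_left hc (by linarith)
      linarith
    have hNKM : (N:ℝ)/(K:ℝ) ≤ (M:ℝ) := by rw [div_le_iff₀ hKr]; nlinarith
    have hiM1 : 1 ≤ i * M := Nat.one_le_iff_ne_zero.2 (Nat.mul_ne_zero (by omega) (by omega))
    have hDP : D ≤ ((i * M : ℕ) : ℝ) := by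
      push_cast
      calc D = (i:ℝ) * ((N:ℝ)/(K:ℝ)) := hDdef
        _ ≤ (i:ℝ) * (M:ℝ) := mul_le_mul_of_nonneg_left hNKM (by linarith)
    have hDQ : D ≤ (N:ℝ) := by
      have h1 : (K:ℝ) * ((N:ℝ)/(K:ℝ)) = (N:ℝ) := by field_simp
      rw [hDdef]
      nlinarith [mul_le_mul_of_nonneg_right hiKr (by positivity : (0:ℝ) ≤ (N:ℝ)/(K:ℝ))]
    have hlle : lIdx (i*M) N D ≤ min (i*M) N - 1 := lIdx_le hiM1 hN hDP hDQ
    have hlD : ((lIdx (i*M) N D : ℕ) : ℝ) < D := lIdx_lt hiM1 hN hD0 hDP hDQ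
    have hlM : lIdx (i*M) N D + 1 ≤ i * M := by
      have h1 := min_le_left (i*M) N
      have h3 : 1 ≤ min (i*M) N := le_min hiM1 hN
      omega
    have hlN : lIdx (i*M) N D + 1 ≤ N := by
      have h2 := min_le_right (i*M) N
      have h3 : 1 ≤ min (i*M) N := le_min hiM1 hN
      omega
    set l : ℝ := ((lIdx (i*M) N D : ℕ) : ℝ) with hldef
    have hl0 : (0:ℝ) ≤ l := by rw [hldef]; positivity
    have hlMr : l + 1 ≤ (i:ℝ) * (M:ℝ) := by
      rw [hldef]; push_cast [← Nat.cast_mul]; exact_mod_cast hlM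
    have hlNr : l + 1 ≤ (N:ℝ) := by rw [hldef]; exact_mod_cast hlN
    rw [dIC, if_neg (by push_neg; exact ⟨hD0, hrD⟩)]
    rw [div_mul_eq_mul_div, le_div_iff₀ (by linarith : (0:ℝ) < D - l)]
    push_cast
    have hM1 : (1:ℝ) ≤ (M:ℝ) := by exact_mod_cast hM
    have key := keyineq (M:ℝ) (N:ℝ) (K:ℝ) (i:ℝ) l hM1 hir hiKr hl0 hlNr hlMr (by linarith)
    have hs : (0:ℝ) < (N:ℝ)/(K:ℝ) - r := by linarith
    have E1 : ((M:ℝ)*(N:ℝ) - (M:ℝ)*(K:ℝ)*r)*(D - l)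
        = ((i:ℝ)*(M:ℝ)*(N:ℝ) - (M:ℝ)*(K:ℝ)*l)*((N:ℝ)/(K:ℝ) - r) := by
      rw [hDdef]; field_simp
    have E2 : ((i:ℝ)*(M:ℝ) - l)*((N:ℝ) - l)*(D - (i:ℝ)*r)
        = ((i:ℝ)*(((i:ℝ)*(M:ℝ) - l)*((N:ℝ) - l)))*((N:ℝ)/(K:ℝ) - r) := by
      rw [hDdef]; ring
    linarith [mul_le_mul_of_nonneg_right key hs.le, E1, E2]

theorem stmt4 (M N K : ℕ) (hM : 0 < M) (hN : 0 < N) (hK : 2 ≤ K)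
    (hNK : N < (K - 1) * M + 1)
    (r : ℝ) (hr0 : 0 ≤ r) (hrN : r ≤ (N : ℝ) / (K : ℝ)) :
    IsGreatest
      {x : ℝ | ∃ D : ℝ, 0 ≤ D ∧ D ≤ (N : ℝ) / (K : ℝ) ∧
        x = (Finset.Icc 1 K).inf' (Finset.nonempty_Icc.2 (by omega))
              (fun i => dIC (i * M) N ((i : ℝ) * D) ((i : ℝ) * r))}
      ((M : ℝ) * (N : ℝ) - (M : ℝ) * (K : ℝ) * r) ∧
    (Finset.Icc 1 K).inf' (Finset.nonempty_Icc.2 (by omega))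
        (fun i => dIC (i * M) N ((i : ℝ) * ((N : ℝ) / (K : ℝ))) ((i : ℝ) * r))
      = (M : ℝ) * (N : ℝ) - (M : ℝ) * (K : ℝ) * r := by
  have hK0 : 0 < K := by omega
  have hKM : N + M ≤ K * M := by
    have h2 : (K - 1) * M + M = K * M := by
      have h1 : K - 1 + 1 = K := by omega
      calc (K-1)*M + M = ((K-1)+1)*M := by ring
        _ = K*M := by rw [h1]
    omega
  have hKpos : (0:ℝ) < (N : ℝ) / (K : ℝ) := by positivity
  have hE : (Finset.Icc 1 K).inf' (Finset.nonempty_Icc.2 (by omega))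
        (fun i => dIC (i * M) N ((i : ℝ) * ((N : ℝ) / (K : ℝ))) ((i : ℝ) * r))
      = (M : ℝ) * (N : ℝ) - (M : ℝ) * (K : ℝ) * r := by
    apply le_antisymm
    · refine le_trans (Finset.inf'_le _ (Finset.mem_Icc.2 ⟨le_refl 1, by omega⟩)) (le_of_eq ?_)
      simp only [one_mul, Nat.cast_one]
      exact dIC_eq M N K hM hN hK0 hKM hr0 hrN
    · refine Finset.le_inf' _ _ (fun i hi => ?_)
      obtain ⟨h1, h2⟩ := Finset.mem_Icc.mp hi
      exact dIC_ge M N K i hM hN hK0 hKM h1 h2 hr0 hrN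
  refine ⟨⟨⟨(N : ℝ) / (K : ℝ), le_of_lt hKpos, le_rfl, hE.symm⟩, ?_⟩, hE⟩
  rintro x ⟨D, hD0', hD, rfl⟩
  refine le_trans (Finset.inf'_le _ (Finset.mem_Icc.2 ⟨le_refl 1, by omega⟩)) ?_
  simp only [one_mul, Nat.cast_one]
  exact dIC_le M N K hM hN hK0 hKM hr0 hrN hD
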